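/- Let ω be a counting measure associated to a locally finite configuration {y_1, y_2, …} of distinct points in X, and let f : X^n → [0,∞] be measurable. Then ∫_{X^n} f(x_1,…,x_n) ω(dx_1)⋯ω(dx_n) = ∑_{P = {P_1,…,P_k} ∈ 𝒫_n} ∫_{X^k_{≠}} f(y^{[P]}) ω(dy_1)⋯ω(dy_k), where 𝒫_n is the set of partitions of {1,…,n}, X^k_{≠} is the set of k-tuples of pairwise distinct points, and y^{[P]} ∈ X^n is defined by y_i^{[P]} = y_j whenever i ∈ P_j. -/

import Mathlib

open MeasureTheory ENNReal

lemma aux_fin {ι : Type*} [Countable ι] :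
    ∀ (m : ℕ) (a : Fin m → ι → ℝ≥0∞),
      ∑' g : Fin m → ι, ∏ i, a i (g i) = ∏ i, ∑' j, a i j := by
  intro m
  induction m with
  | zero =>
    intro a
    rw [tsum_eq_single (default : Fin 0 → ι) (fun b hb => absurd (Subsingleton.elim b default) hb)]
    simp
  | succ m ih =>
    intro a
    rw [← Equiv.tsum_eq (Fin.consEquiv (fun _ : Fin (m+1) => ι)), ENNReal.tsum_prod', Fin.prod_univ_succ]
    calc ∑' (j : ι) (g : Fin m → ι), ∏ i : Fin (m+1), a i ((Fin.consEquiv (fun _ : Fin (m+1) => ι)) (j, g) i)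
        = ∑' (j : ι) (g : Fin m → ι), a 0 j * ∏ i : Fin m, a i.succ (g i) := by
          refine tsum_congr fun j => tsum_congr fun g => ?_
          rw [Fin.prod_univ_succ]
          rfl
      _ = (∑' j, a 0 j) * ∏ i : Fin m, ∑' j, a i.succ j := by
          rw [← ih fun i => a i.succ, ← ENNReal.tsum_mul_right]
          exact tsum_congr fun j => ENNReal.tsum_mul_left

lemma aux_tsum_prod {α : Type*} [Fintype α] {ι : Type*} [Countable ι] (a : α → ι → ℝ≥0∞) :
    ∑' g : α → ι, ∏ i, a i (g i) = ∏ i, ∑' j, a i j := by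
  classical
  let e := Fintype.equivFin α
  let E : (Fin (Fintype.card α) → ι) ≃ (α → ι) := e.symm.arrowCongr (Equiv.refl ι)
  rw [← Equiv.tsum_eq E (fun g => ∏ i, a i (g i)),
    show (∏ i, ∑' j, a i j) = ∏ k : Fin (Fintype.card α), ∑' j, a (e.symm k) j from
      (Fintype.prod_equiv e _ _ fun i => by simp),
    ← aux_fin _ fun k => a (e.symm k)]
  refine tsum_congr fun h => Fintype.prod_equiv e _ _ fun i => ?_
  simp [E, Equiv.arrowCongr]

lemma aux_pi_sum_dirac {X : Type*} [MeasurableSpace X]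
    {ι : Type*} [Countable ι] (y : ι → X) {α : Type*} [Fintype α]
    (μ : Measure X) [SigmaFinite μ] (hμ : μ = Measure.sum fun i => Measure.dirac (y i)) :
    Measure.pi (fun _ : α => μ)
      = Measure.sum fun g : α → ι => Measure.dirac (fun j => y (g j)) := by
  refine Measure.pi_eq fun s hs => ?_
  rw [Measure.sum_apply _ (MeasurableSet.univ_pi hs)]
  have : ∀ g : α → ι, (Measure.dirac fun j => y (g j)) (Set.univ.pi s)
      = ∏ i, Set.indicator (s i) 1 (y (g i)) := by
    intro g
    rw [Measure.dirac_apply' _ (MeasurableSet.univ_pi hs)]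
    by_cases h : (fun j => y (g j)) ∈ Set.univ.pi s
    · rw [Set.indicator_of_mem h]
      rw [Set.mem_univ_pi] at h
      simp [Set.indicator_of_mem (h _)]
    · rw [Set.indicator_of_notMem h]
      rw [Set.mem_univ_pi] at h
      push_neg at h
      obtain ⟨i, hi⟩ := h
      exact (Finset.prod_eq_zero (Finset.mem_univ i) (by simp [Set.indicator_of_notMem hi])).symm
  simp_rw [this]
  rw [aux_tsum_prod fun i j => Set.indicator (s i) 1 (y j)]
  refine Finset.prod_congr rfl fun i _ => ?_
  rw [hμ, Measure.sum_apply _ (hs i)]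
  exact tsum_congr fun j => (Measure.dirac_apply' _ (hs i)).symm

lemma aux_lintegral_pi {X : Type*} [MeasurableSpace X]
    {ι : Type*} [Countable ι] (y : ι → X) {α : Type*} [Fintype α]
    (μ : Measure X) [SigmaFinite μ] (hμ : μ = Measure.sum fun i => Measure.dirac (y i))
    (f : (α → X) → ℝ≥0∞) (hf : Measurable f) :
    ∫⁻ x, f x ∂(Measure.pi fun _ : α => μ) = ∑' g : α → ι, f (fun j => y (g j)) := by
  rw [aux_pi_sum_dirac y μ hμ, lintegral_sum_measure]
  exact tsum_congr fun g => lintegral_dirac' _ hf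

section Comb
variable {n : ℕ} {ι : Type*}

lemma aux_parts_eq_image (P : Finpartition (Finset.univ : Finset (Fin n))) :
    P.parts = Finset.univ.image P.part := by
  ext t
  simp only [Finset.mem_image, Finset.mem_univ, true_and]
  constructor
  · intro ht
    obtain ⟨a, ha⟩ := P.nonempty_of_mem_parts ht
    exact ⟨a, P.part_eq_of_mem ht ha⟩
  · rintro ⟨a, rfl⟩
    exact P.part_mem.mpr (Finset.mem_univ a)

lemma aux_finpartition_ext {P Q : Finpartition (Finset.univ : Finset (Fin n))}
    (h : ∀ i, P.part i = Q.part i) : P = Q :=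
  Finpartition.ext (by
    rw [aux_parts_eq_image, aux_parts_eq_image]
    exact Finset.image_congr fun i _ => h i)

noncomputable def partOf (g : Fin n → ι) : Finpartition (Finset.univ : Finset (Fin n)) :=
  letI : DecidableRel (Setoid.ker g).r := fun _ _ => Classical.dec _
  Finpartition.ofSetoid (Setoid.ker g)

lemma mem_partOf {g : Fin n → ι} {i j : Fin n} : j ∈ (partOf g).part i ↔ g i = g j := by
  letI : DecidableRel (Setoid.ker g).r := fun _ _ => Classical.dec _
  unfold partOf
  exact Finpartition.mem_part_ofSetoid_iff_rel

lemma partOf_part_eq {g : Fin n → ι} {i j : Fin n} (h : g i = g j) :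
    (partOf g).part i = (partOf g).part j :=
  Finpartition.eq_of_mem_parts _ ((partOf g).part_mem.mpr (Finset.mem_univ i))
    ((partOf g).part_mem.mpr (Finset.mem_univ j)) (mem_partOf.mpr h)
    ((partOf g).mem_part (Finset.mem_univ j))

noncomputable def hfun (g : Fin n → ι) : {s // s ∈ (partOf g).parts} → ι :=
  fun s => g (s.1.min' ((partOf g).nonempty_of_mem_parts s.2))

lemma hfun_part (g : Fin n → ι) (i : Fin n) :
    hfun g ⟨(partOf g).part i, (partOf g).part_mem.mpr (Finset.mem_univ i)⟩ = g i := by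
  have hne := (partOf g).nonempty_of_mem_parts ((partOf g).part_mem.mpr (Finset.mem_univ i))
  exact (mem_partOf.mp (Finset.min'_mem _ hne)).symm

lemma hfun_injective (g : Fin n → ι) : Function.Injective (hfun g) := by
  rintro ⟨s, hs⟩ ⟨t, ht⟩ hst
  unfold hfun at hst
  dsimp only at hst
  have h1 : (partOf g).part (s.min' ((partOf g).nonempty_of_mem_parts hs)) = s :=
    (partOf g).part_eq_of_mem hs (Finset.min'_mem _ _)
  have h2 : (partOf g).part (t.min' ((partOf g).nonempty_of_mem_parts ht)) = t :=
    (partOf g).part_eq_of_mem ht (Finset.min'_mem _ _)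
  refine Subtype.ext ?_
  show s = t
  rw [← h1, ← h2]
  exact partOf_part_eq hst

abbrev PartPair (n : ℕ) (ι : Type*) :=
  Σ P : Finpartition (Finset.univ : Finset (Fin n)),
    ↥{h : {s // s ∈ P.parts} → ι | Function.Injective h}

lemma aux_pair_ext {P Q : Finpartition (Finset.univ : Finset (Fin n))}
    (hPQ : P = Q)
    {h : ↥{h : {s // s ∈ P.parts} → ι | Function.Injective h}}
    {k : ↥{h : {s // s ∈ Q.parts} → ι | Function.Injective h}}
    (hhk : ∀ i : Fin n, h.1 ⟨P.part i, P.part_mem.mpr (Finset.mem_univ i)⟩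
      = k.1 ⟨Q.part i, Q.part_mem.mpr (Finset.mem_univ i)⟩) :
    (⟨P, h⟩ : PartPair n ι) = ⟨Q, k⟩ := by
  subst hPQ
  have : h = k := Subtype.ext (funext fun s => by
    obtain ⟨a, ha⟩ := P.nonempty_of_mem_parts s.2
    have h1 : (⟨P.part a, P.part_mem.mpr (Finset.mem_univ a)⟩ : {s // s ∈ P.parts}) = s :=
      Subtype.ext (P.part_eq_of_mem s.2 ha)
    rw [← h1]
    exact hhk a)
  rw [this]

noncomputable def pairEquiv (n : ℕ) (ι : Type*) : (Fin n → ι) ≃ PartPair n ι where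
  toFun g := ⟨partOf g, ⟨hfun g, hfun_injective g⟩⟩
  invFun x := fun i => x.2.1 ⟨x.1.part i, x.1.part_mem.mpr (Finset.mem_univ i)⟩
  left_inv g := funext fun i => hfun_part g i
  right_inv := by
    rintro ⟨P, h⟩
    have hinj : Function.Injective h.1 := h.2
    set g : Fin n → ι := fun i => h.1 ⟨P.part i, P.part_mem.mpr (Finset.mem_univ i)⟩ with hg
    show (⟨partOf g, ⟨hfun g, hfun_injective g⟩⟩ : PartPair n ι) = ⟨P, h⟩
    have hPart : ∀ i, (partOf g).part i = P.part i := by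
      intro i
      ext j
      rw [mem_partOf]
      simp only [hg]
      constructor
      · intro hij
        have h3 : P.part i = P.part j := congrArg Subtype.val (hinj hij)
        exact h3 ▸ P.mem_part (Finset.mem_univ j)
      · intro hj
        have h3 : P.part j = P.part i :=
          P.part_eq_of_mem (P.part_mem.mpr (Finset.mem_univ i)) hj
        exact congrArg h.1 (Subtype.ext h3.symm)
    refine aux_pair_ext (aux_finpartition_ext hPart) fun i => (hfun_part g i).trans ?_
    simp only [hg]
end Comb


/-- Decomposition of a multiple integral against the counting measure of a configuration
according to partitions recording which coordinates coincide. -/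
theorem stmt_5 {X : Type*} [MetricSpace X] [LocallyCompactSpace X]
    [TopologicalSpace.SeparableSpace X] [MeasurableSpace X] [BorelSpace X]
    (ι : Type*) [Countable ι] (y : ι → X) (hy : Function.Injective y)
    (ω : Measure X) [SigmaFinite ω] (hω : ω = Measure.sum fun i => Measure.dirac (y i))
    (n : ℕ) (f : (Fin n → X) → ℝ≥0∞) (hf : Measurable f) :
    ∫⁻ x : Fin n → X, f x ∂(Measure.pi fun _ : Fin n => ω)
      = ∑' P : Finpartition (Finset.univ : Finset (Fin n)),
          ∫⁻ z : { s // s ∈ P.parts } → X,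
            Set.indicator {z : { s // s ∈ P.parts } → X | Function.Injective z}
              (fun z => f (fun i => z ⟨P.part i, P.part_mem.mpr (Finset.mem_univ i)⟩)) z
            ∂(Measure.pi fun _ : { s // s ∈ P.parts } => ω) := by
  -- rewrite each inner integral as a sum over injective labellings
  have hRHS : ∀ P : Finpartition (Finset.univ : Finset (Fin n)),
      ∫⁻ z : { s // s ∈ P.parts } → X,
        Set.indicator {z : { s // s ∈ P.parts } → X | Function.Injective z}
          (fun z => f (fun i => z ⟨P.part i, P.part_mem.mpr (Finset.mem_univ i)⟩)) z
        ∂(Measure.pi fun _ : { s // s ∈ P.parts } => ω)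
      = ∑' h : ↥{h : { s // s ∈ P.parts } → ι | Function.Injective h},
          f (fun i => y (h.1 ⟨P.part i, P.part_mem.mpr (Finset.mem_univ i)⟩)) := by
    intro P
    have hmeas_inner : Measurable
        (fun z : { s // s ∈ P.parts } → X =>
          f (fun i => z ⟨P.part i, P.part_mem.mpr (Finset.mem_univ i)⟩)) :=
      hf.comp (measurable_pi_lambda _ fun i => measurable_pi_apply _)
    haveI : SecondCountableTopology X := UniformSpace.secondCountable_of_separable X
    have hset : MeasurableSet {z : { s // s ∈ P.parts } → X | Function.Injective z} := by
      have hrw : {z : { s // s ∈ P.parts } → X | Function.Injective z}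
          = ⋂ (a : { s // s ∈ P.parts }) (b : { s // s ∈ P.parts }) (_ : a ≠ b),
              {z : { s // s ∈ P.parts } → X | z a = z b}ᶜ := by
        ext z
        simp only [Set.mem_iInter, Set.mem_compl_iff, Set.mem_setOf_eq]
        constructor
        · intro hz a b hab hzz
          exact hab (hz hzz)
        · intro hz a b hab
          by_contra hne
          exact hz a b hne hab
      rw [hrw]
      refine MeasurableSet.iInter fun a => MeasurableSet.iInter fun b =>
        MeasurableSet.iInter fun hab => MeasurableSet.compl ?_
      exact IsClosed.measurableSet
        (isClosed_eq (continuous_apply a) (continuous_apply b))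
    rw [aux_lintegral_pi y ω hω _ (hmeas_inner.indicator hset)]
    have step : (∑' h : { s // s ∈ P.parts } → ι,
        Set.indicator {z : { s // s ∈ P.parts } → X | Function.Injective z}
          (fun z => f (fun i => z ⟨P.part i, P.part_mem.mpr (Finset.mem_univ i)⟩))
          (fun j => y (h j)))
        = ∑' h : { s // s ∈ P.parts } → ι,
            Set.indicator {h : { s // s ∈ P.parts } → ι | Function.Injective h}
              (fun h => f (fun i => y (h ⟨P.part i, P.part_mem.mpr (Finset.mem_univ i)⟩))) h := by
      refine tsum_congr fun h => ?_
      by_cases hh : Function.Injective h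
      · rw [Set.indicator_of_mem (show (fun j => y (h j)) ∈
            {z : { s // s ∈ P.parts } → X | Function.Injective z} from hy.comp hh),
          Set.indicator_of_mem (show h ∈ {h : { s // s ∈ P.parts } → ι |
            Function.Injective h} from hh)]
      · rw [Set.indicator_of_notMem
            (show (fun j => y (h j)) ∉ {z : { s // s ∈ P.parts } → X | Function.Injective z}
              from fun hc => hh (Function.Injective.of_comp hc)),
          Set.indicator_of_notMem (show h ∉ {h : { s // s ∈ P.parts } → ι |
            Function.Injective h} from hh)]
    rw [step, ← tsum_subtype {h : { s // s ∈ P.parts } → ι | Function.Injective h}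
      (fun h => f (fun i => y (h ⟨P.part i, P.part_mem.mpr (Finset.mem_univ i)⟩)))]
  simp_rw [hRHS]
  rw [aux_lintegral_pi y ω hω f hf]
  rw [← ENNReal.tsum_sigma'
    (fun x : PartPair n ι => f (fun i => y (x.2.1 ⟨x.1.part i, x.1.part_mem.mpr (Finset.mem_univ i)⟩)))]
  rw [← Equiv.tsum_eq (pairEquiv n ι)
    (fun x : PartPair n ι => f (fun i => y (x.2.1 ⟨x.1.part i, x.1.part_mem.mpr (Finset.mem_univ i)⟩)))]
  refine tsum_congr fun g => ?_
  congr 1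
  funext i
  exact congrArg y (hfun_part g i).symm
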